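/- Let (δ_s,𝒢) be an ICSIE instance with n messages and m receivers, let s ∈ [n], and let t ∈ [m] be a receiver with s ∈ 𝒳_t. Let (δ_s′,𝒢′) be the instance with n+1 messages and m+1 receivers obtained from (δ_s,𝒢) by: adding a new message indexed n+1; adding a new receiver R_{m+1} with side information set {s}, wanted set {n+1}, and error resistance capability 0; and replacing 𝒳_t by (𝒳_t \ {s}) ∪ {n+1} (all other data unchanged). If F : F_q^n → F_q^N is a valid (δ_s,𝒢)-ICSIE encoding, then F′ : F_q^{n+1} → F_q^{N+1} defined by F′(X) = (F(X_{[n]}), X_{n+1} + X_s) is a valid (δ_s′,𝒢′)-ICSIE encoding. -/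

import Mathlib

open Finset

/-- Restriction of a vector to the coordinates in a finite index set. -/
def proj {ι 𝔽 : Type*} (A : Finset ι) (x : ι → 𝔽) : {a // a ∈ A} → 𝔽 :=
  fun a => x a.1

/-- `enc` is a valid (δ,𝒢)-ICSIE encoding: decoders exist recovering the wanted
messages from the codeword and side information with at most `δ r` errors. -/
def ValidEnc (𝔽 : Type*) [DecidableEq 𝔽] {ι R C : Type*}
    (X f : R → Finset ι) (δ : R → ℕ) (enc : (ι → 𝔽) → C) : Prop :=
  ∃ D : (r : R) → C → ({a // a ∈ X r} → 𝔽) → ({a // a ∈ f r} → 𝔽),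
    ∀ (r : R) (x : ι → 𝔽) (xt : {a // a ∈ X r} → 𝔽),
      hammingDist (proj (X r) x) xt ≤ δ r → D r (enc x) xt = proj (f r) x

/-- Extend a partially defined vector by zero. -/
def tot {ι 𝔽 : Type*} [DecidableEq ι] [Zero 𝔽] (A : Finset ι)
    (g : {a // a ∈ A} → 𝔽) (i : ι) : 𝔽 :=
  if h : i ∈ A then g ⟨i, h⟩ else 0

theorem tot_eq {ι 𝔽 : Type*} [DecidableEq ι] [Zero 𝔽] {A : Finset ι}
    (g : {a // a ∈ A} → 𝔽) {i : ι} (h : i ∈ A) : tot A g i = g ⟨i, h⟩ :=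
  dif_pos h

/-- splitting off a side-information source symbol. Add a new
message `n+1` and a new receiver (side information `{s}`, wanted set `{n+1}`,
capability 0), and replace `𝒳_t` by `(𝒳_t \ {s}) ∪ {n+1}`.  If `F` is a valid
(δ_s,𝒢)-ICSIE encoding, then `F′(X) = (F(X_{[n]}), X_{n+1} + X_s)` is a valid
(δ_s′,𝒢′)-ICSIE encoding. -/
theorem valid_after_source_split
    {𝔽 : Type*} [Field 𝔽] [Fintype 𝔽] [DecidableEq 𝔽]
    {n m N : ℕ} (X f : Fin m → Finset (Fin n)) (δ : Fin m → ℕ)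
    (hdisj : ∀ i, Disjoint (f i) (X i))
    (s : Fin n) (t : Fin m) (hst : s ∈ X t)
    (F : (Fin n → 𝔽) → (Fin N → 𝔽)) (hF : ValidEnc 𝔽 X f δ F) :
    ValidEnc 𝔽
      (Fin.snoc
        (fun j : Fin m =>
          if j = t then ((X t).erase s).image Fin.castSucc ∪ {Fin.last n}
          else (X j).image Fin.castSucc)
        ({s.castSucc} : Finset (Fin (n + 1))))
      (Fin.snoc (fun j : Fin m => (f j).image Fin.castSucc)
        ({Fin.last n} : Finset (Fin (n + 1))))
      (Fin.snoc δ 0)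
      (fun x : Fin (n + 1) → 𝔽 =>
        (Fin.snoc (F fun i : Fin n => x i.castSucc)
          (x (Fin.last n) + x s.castSucc) : Fin (N + 1) → 𝔽)) := by
  classical
  obtain ⟨D, hD⟩ := hF
  refine ⟨fun r c xt =>
    if hr : r = Fin.last m then
      fun _ => c (Fin.last N) - tot _ xt (Fin.castSucc s)
    else
      fun a =>
        if ha : (a.1 : ℕ) < n then
          tot (f (r.castPred hr))
            (D (r.castPred hr) (fun k => c (Fin.castSucc k))
              (proj (X (r.castPred hr))
                (fun i =>
                  if r.castPred hr = t ∧ i = s then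
                    c (Fin.last N) - tot _ xt (Fin.last n)
                  else tot _ xt (Fin.castSucc i))))
            (Fin.castLT a.1 ha)
        else 0, ?_⟩
  intro r x xt hdist
  induction r using Fin.lastCases with
  | last =>
      have hδ : (Fin.snoc δ 0 : Fin (m+1) → ℕ) (Fin.last m) = 0 := Fin.snoc_last _ _
      rw [hδ, Nat.le_zero, hammingDist_eq_zero] at hdist
      funext a
      have ha : a.1 = Fin.last n := by
        have h2 := a.2
        simp only [Fin.snoc_last, Finset.mem_singleton] at h2
        exact h2
      have hm : Fin.castSucc s ∈ (Fin.snoc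
          (fun j => if j = t then Finset.image Fin.castSucc ((X t).erase s) ∪ {Fin.last n}
            else Finset.image Fin.castSucc (X j)) {s.castSucc} : Fin (m+1) → Finset (Fin (n+1)))
          (Fin.last m) := by
        rw [Fin.snoc_last]; exact Finset.mem_singleton_self _
      simp only [dif_pos]
      rw [tot_eq xt hm, ← hdist]
      simp only [proj, Fin.snoc_last, ha]
      ring
  | cast j =>
      have hr : Fin.castSucc j ≠ Fin.last m := (Fin.castSucc_lt_last j).ne
      simp only [dif_neg hr, Fin.castPred_castSucc]
      revert xt
      rw [show (Fin.snoc
            (fun j' : Fin m => if j' = t then Finset.image Fin.castSucc ((X t).erase s) ∪ {Fin.last n}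
              else Finset.image Fin.castSucc (X j'))
            ({s.castSucc} : Finset (Fin (n + 1))) : Fin (m + 1) → Finset (Fin (n + 1)))
            (Fin.castSucc j) =
          (if j = t then Finset.image Fin.castSucc ((X t).erase s) ∪ {Fin.last n}
            else Finset.image Fin.castSucc (X j)) from Fin.snoc_castSucc _ _ _,
        show (Fin.snoc (fun j' : Fin m => Finset.image Fin.castSucc (f j'))
            ({Fin.last n} : Finset (Fin (n + 1))) : Fin (m + 1) → Finset (Fin (n + 1)))
            (Fin.castSucc j) = Finset.image Fin.castSucc (f j) from Fin.snoc_castSucc _ _ _,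
        show (Fin.snoc δ 0 : Fin (m + 1) → ℕ) (Fin.castSucc j) = δ j from Fin.snoc_castSucc _ _ _]
      intro xt hdist
      simp only [Fin.snoc_castSucc, Fin.snoc_last]
      have hmem1 : j = t → Fin.last n ∈ (if j = t then Finset.image Fin.castSucc ((X t).erase s) ∪ {Fin.last n}
          else Finset.image Fin.castSucc (X j)) := by
        intro h
        rw [if_pos h]
        exact Finset.mem_union_right _ (Finset.mem_singleton_self _)
      have hmem2 : ∀ i : Fin n, i ∈ X j → ¬(j = t ∧ i = s) →
          Fin.castSucc i ∈ (if j = t then Finset.image Fin.castSucc ((X t).erase s) ∪ {Fin.last n}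
          else Finset.image Fin.castSucc (X j)) := by
        intro i hi hns
        by_cases hjt : j = t
        · rw [if_pos hjt]
          subst hjt
          exact Finset.mem_union_left _ (Finset.mem_image_of_mem _
            (Finset.mem_erase.2 ⟨fun hs => hns ⟨rfl, hs⟩, hi⟩))
        · rw [if_neg hjt]
          exact Finset.mem_image_of_mem _ hi
      have hle : hammingDist (proj (X j) (fun i => x i.castSucc))
          (proj (X j) (fun i =>
            if j = t ∧ i = s then
              x (Fin.last n) + x s.castSucc - tot (if j = t then Finset.image Fin.castSucc ((X t).erase s) ∪ {Fin.last n}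
          else Finset.image Fin.castSucc (X j)) xt (Fin.last n)
            else tot (if j = t then Finset.image Fin.castSucc ((X t).erase s) ∪ {Fin.last n}
          else Finset.image Fin.castSucc (X j)) xt i.castSucc)) ≤ δ j := by
        refine le_trans ?_ hdist
        simp only [hammingDist]
        refine Finset.card_le_card_of_injOn
          (fun i : {a // a ∈ X j} =>
            if h : j = t ∧ i.1 = s then
              (⟨Fin.last n, hmem1 h.1⟩ : {a // a ∈ (if j = t then Finset.image Fin.castSucc ((X t).erase s) ∪ {Fin.last n}
          else Finset.image Fin.castSucc (X j))})
            else ⟨Fin.castSucc i.1, hmem2 i.1 i.2 h⟩) ?_ ?_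
        · rintro ⟨i, hi⟩ hne
          simp only [Finset.mem_coe, Finset.mem_filter, Finset.mem_univ, true_and] at hne ⊢
          simp only [proj] at hne ⊢
          by_cases h : j = t ∧ i = s
          · rw [dif_pos h]
            rw [if_pos h, tot_eq xt (hmem1 h.1)] at hne
            show x (Fin.last n) ≠ xt ⟨Fin.last n, hmem1 h.1⟩
            intro hEq
            apply hne
            rw [← hEq, h.2]
            ring
          · rw [dif_neg h]
            rw [if_neg h, tot_eq xt (hmem2 i hi h)] at hne
            exact hne
        · rintro ⟨i1, h1⟩ - ⟨i2, h2⟩ - heq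
          simp only [] at heq
          by_cases c1 : j = t ∧ i1 = s <;> by_cases c2 : j = t ∧ i2 = s
          · exact Subtype.ext (c1.2.trans c2.2.symm)
          · rw [dif_pos c1, dif_neg c2] at heq
            exact absurd (congrArg Subtype.val heq).symm (Fin.castSucc_lt_last i2).ne
          · rw [dif_neg c1, dif_pos c2] at heq
            exact absurd (congrArg Subtype.val heq) (Fin.castSucc_lt_last i1).ne
          · rw [dif_neg c1, dif_neg c2] at heq
            exact Subtype.ext (Fin.castSucc_injective _ (congrArg Subtype.val heq))
      have hkey := hD j (fun i => x i.castSucc) _ hle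
      funext a
      obtain ⟨b, hb, hba⟩ := Finset.mem_image.1 a.2
      have hlt : ((a.1 : Fin (n + 1)) : ℕ) < n := by
        rw [← hba]
        exact b.isLt
      rw [dif_pos hlt]
      have hcast : Fin.castLT (a.1 : Fin (n + 1)) hlt = b := by
        apply Fin.ext
        show ((a.1 : Fin (n + 1)) : ℕ) = (b : ℕ)
        rw [← hba]
        rfl
      rw [hcast, tot_eq _ hb]
      exact (congrFun hkey ⟨b, hb⟩).trans (by simp only [proj]; rw [hba])
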